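/- Let φ : ℝ → [-∞,∞) be a concave function whose domain is contained in [0,1], and suppose ∫₀¹ (e^{φ(u)/2} - 1)² du ≤ δ² for some δ ∈ (0, 2^{-5/2}]. Then for every x ∈ [0,1] with min(x, 1-x) ≥ 4δ², one has φ(x) ≥ -4δ / √(min(x, 1-x)). -/

import Mathlib

open MeasureTheory


private lemma min_le_rpow_mul {a b t : ℝ} (ha : 0 < a) (hb : 0 < b) (ht0 : 0 ≤ t) (ht1 : t ≤ 1) :
    min a b ≤ a ^ t * b ^ (1 - t) := by
  have hm : 0 < min a b := lt_min ha hb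
  have h1 : min a b ^ t ≤ a ^ t := Real.rpow_le_rpow hm.le (min_le_left a b) ht0
  have h2 : min a b ^ (1 - t) ≤ b ^ (1 - t) :=
    Real.rpow_le_rpow hm.le (min_le_right a b) (by linarith)
  have e : t + (1 - t) = 1 := by ring
  calc min a b = min a b ^ t * min a b ^ (1 - t) := by
        rw [← Real.rpow_add hm, e, Real.rpow_one]
    _ ≤ a ^ t * b ^ (1 - t) :=
        mul_le_mul h1 h2 (Real.rpow_nonneg hm.le _) (Real.rpow_nonneg ha.le _)

private lemma quasi (f : ℝ → ℝ)
    (hlc : ∀ x y : ℝ, ∀ t : ℝ, 0 ≤ t → t ≤ 1 →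
      f x ^ t * f y ^ (1 - t) ≤ f (t * x + (1 - t) * y))
    {u v z : ℝ} (hu : 0 < f u) (hv : 0 < f v) (huz : u ≤ z) (hzv : z ≤ v) :
    min (f u) (f v) ≤ f z := by
  rcases eq_or_lt_of_le (huz.trans hzv) with h | h
  · have hzu : z = u := le_antisymm (h ▸ hzv) huz
    subst hzu
    exact min_le_left _ _
  · have hvu : 0 < v - u := by linarith
    set t := (v - z) / (v - u) with ht
    have ht0 : 0 ≤ t := div_nonneg (by linarith) hvu.le
    have ht1 : t ≤ 1 := (div_le_one hvu).2 (by linarith)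
    have hcomb : t * u + (1 - t) * v = z := by
      have hmul : t * (v - u) = v - z := by rw [ht]; exact div_mul_cancel₀ _ hvu.ne'
      linear_combination -hmul
    calc min (f u) (f v) ≤ f u ^ t * f v ^ (1 - t) := min_le_rpow_mul hu hv ht0 ht1
      _ ≤ f (t * u + (1 - t) * v) := hlc u v t ht0 ht1
      _ = f z := by rw [hcomb]

private lemma logconcave_measurable (f : ℝ → ℝ) (hf0 : ∀ x, 0 ≤ f x)
    (hlc : ∀ x y : ℝ, ∀ t : ℝ, 0 ≤ t → t ≤ 1 →
      f x ^ t * f y ^ (1 - t) ≤ f (t * x + (1 - t) * y)) :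
    Measurable f := by
  apply measurable_of_Ioi
  intro a
  rcases lt_or_ge a 0 with ha | ha
  · have : f ⁻¹' Set.Ioi a = Set.univ :=
      Set.eq_univ_of_forall fun u => lt_of_lt_of_le ha (hf0 u)
    rw [this]; exact MeasurableSet.univ
  · apply Set.OrdConnected.measurableSet
    constructor
    intro u hu v hv z hz
    have hu' : a < f u := hu
    have hv' : a < f v := hv
    have hfu : 0 < f u := lt_of_le_of_lt ha hu'
    have hfv : 0 < f v := lt_of_le_of_lt ha hv'
    have := quasi f hlc hfu hfv hz.1 hz.2
    exact lt_of_lt_of_le (lt_min hu' hv') this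

private lemma rpow_side_aux {A D t τ : ℝ} (hA : 0 ≤ A) (hD : 1 ≤ D)
    (ht : A ^ t ≤ D) (hτ : 0 < τ) (hτt : τ ≤ t) : A ≤ D ^ (1/τ) := by
  have ht0 : 0 < t := lt_of_lt_of_le hτ hτt
  have h1 : (A ^ t) ^ (1/t) = A := by
    rw [← Real.rpow_mul hA, mul_one_div, div_self ht0.ne', Real.rpow_one]
  have h2 : (A ^ t) ^ (1/t) ≤ D ^ (1/t) :=
    Real.rpow_le_rpow (Real.rpow_nonneg hA t) ht (by positivity)
  have h3 : D ^ (1/t) ≤ D ^ (1/τ) :=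
    Real.rpow_le_rpow_of_exponent_le hD (one_div_le_one_div_of_le hτ hτt)
  calc A = (A ^ t) ^ (1/t) := h1.symm
    _ ≤ D ^ (1/t) := h2
    _ ≤ D ^ (1/τ) := h3

private lemma side_aux (f : ℝ → ℝ) (hf0 : ∀ x, 0 ≤ f x)
    {z w v c t τ : ℝ} (hc0 : 0 < c) (hc1 : c ≤ 1) (hcv : c ≤ f v) (hcw : c ≤ f w)
    (ht1 : t ≤ 1)
    (h : f z ^ t * f v ^ (1 - t) ≤ f w) (hτ : 0 < τ) (hτt : τ ≤ t) :
    f z ≤ (f w / c) ^ (1/τ) := by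
  have ht0 : 0 < t := lt_of_lt_of_le hτ hτt
  have hc' : c ≤ f v ^ (1 - t) := by
    calc c = c ^ (1:ℝ) := (Real.rpow_one c).symm
      _ ≤ c ^ (1 - t) := Real.rpow_le_rpow_of_exponent_ge hc0 hc1 (by linarith)
      _ ≤ f v ^ (1 - t) := Real.rpow_le_rpow hc0.le hcv (by linarith)
  have hfz : 0 ≤ f z ^ t := Real.rpow_nonneg (hf0 z) t
  have h2 : f z ^ t * c ≤ f w :=
    le_trans (mul_le_mul_of_nonneg_left hc' hfz) h
  have h3 : f z ^ t ≤ f w / c := (le_div_iff₀ hc0).2 h2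
  have hD : 1 ≤ f w / c := (one_le_div hc0).2 hcw
  exact rpow_side_aux (hf0 z) hD h3 hτ hτt

private lemma logconcave_bdd (f : ℝ → ℝ) (hf0 : ∀ x, 0 ≤ f x)
    (hlc : ∀ x y : ℝ, ∀ t : ℝ, 0 ≤ t → t ≤ 1 →
      f x ^ t * f y ^ (1 - t) ≤ f (t * x + (1 - t) * y))
    (hdom : ∀ x, x ∉ Set.Icc (0:ℝ) 1 → f x = 0) :
    ∃ M : ℝ, ∀ u, f u ≤ M := by
  by_cases h2 : ∃ u₀ u₁ : ℝ, u₀ < u₁ ∧ 0 < f u₀ ∧ 0 < f u₁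
  · obtain ⟨u₀, u₁, h01, hp0, hp1⟩ := h2
    have hu₀ : u₀ ∈ Set.Icc (0:ℝ) 1 := by
      by_contra h; exact hp0.ne' (hdom u₀ h)
    have hu₁ : u₁ ∈ Set.Icc (0:ℝ) 1 := by
      by_contra h; exact hp1.ne' (hdom u₁ h)
    obtain ⟨h00, h0b⟩ := hu₀
    obtain ⟨h10, h1b⟩ := hu₁
    have hu₁pos : 0 < u₁ := lt_of_le_of_lt h00 h01
    have hu₀lt1 : u₀ < 1 := lt_of_lt_of_le h01 h1b
    set c : ℝ := min (min (f u₀) (f u₁)) 1 with hc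
    have hc0 : 0 < c := lt_min (lt_min hp0 hp1) one_pos
    have hc1 : c ≤ 1 := min_le_right _ _
    have hcu0 : c ≤ f u₀ := (min_le_left _ _).trans (min_le_left _ _)
    have hcu1 : c ≤ f u₁ := (min_le_left _ _).trans (min_le_right _ _)
    have hmid_lb : ∀ z ∈ Set.Icc u₀ u₁, c ≤ f z := fun z hz =>
      le_trans (le_min hcu0 hcu1) (quasi f hlc hp0 hp1 hz.1 hz.2)
    -- middle upper bound
    have hmid : ∀ z ∈ Set.Icc u₀ u₁, f z ≤ f ((u₀+u₁)/2) ^ 2 / c := by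
      intro z hz
      have hz' : u₀ + u₁ - z ∈ Set.Icc u₀ u₁ := ⟨by linarith [hz.2], by linarith [hz.1]⟩
      have hlb : c ≤ f (u₀ + u₁ - z) := hmid_lb _ hz'
      have h : f z ^ (2⁻¹:ℝ) * f (u₀+u₁-z) ^ (1 - 2⁻¹:ℝ) ≤ f ((u₀+u₁)/2) := by
        have hh := hlc z (u₀+u₁-z) 2⁻¹ (by norm_num) (by norm_num)
        have e : (2⁻¹:ℝ) * z + (1 - 2⁻¹) * (u₀ + u₁ - z) = (u₀+u₁)/2 := by ring
        rwa [e] at hh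
      have h2 : f z ^ (2⁻¹:ℝ) * c ^ (2⁻¹:ℝ) ≤ f ((u₀+u₁)/2) := by
        refine le_trans ?_ h
        have e : (1 - 2⁻¹ : ℝ) = 2⁻¹ := by norm_num
        rw [e]
        exact mul_le_mul_of_nonneg_left (Real.rpow_le_rpow hc0.le hlb (by norm_num))
          (Real.rpow_nonneg (hf0 z) _)
      have hB : 0 < c ^ (2⁻¹:ℝ) := Real.rpow_pos_of_pos hc0 _
      have hA : f z ^ (2⁻¹:ℝ) ≤ f ((u₀+u₁)/2) / c ^ (2⁻¹:ℝ) := (le_div_iff₀ hB).2 h2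
      have hsq : (f z ^ (2⁻¹:ℝ))^2 ≤ (f ((u₀+u₁)/2) / c ^ (2⁻¹:ℝ))^2 :=
        pow_le_pow_left₀ (Real.rpow_nonneg (hf0 z) _) hA 2
      have e1 : (f z ^ (2⁻¹:ℝ))^(2:ℕ) = f z := by
        rw [← Real.rpow_natCast (f z ^ (2⁻¹:ℝ)) 2, ← Real.rpow_mul (hf0 z)]
        norm_num
      have e2 : (c ^ (2⁻¹:ℝ))^(2:ℕ) = c := by
        rw [← Real.rpow_natCast (c ^ (2⁻¹:ℝ)) 2, ← Real.rpow_mul hc0.le]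
        norm_num
      rw [div_pow, e2] at hsq
      rw [← e1]
      exact hsq
    -- left bound
    have hleft : ∀ z ∈ Set.Icc (0:ℝ) u₀, f z ≤ (f u₀ / c) ^ (1/((u₁-u₀)/u₁)) := by
      intro z hz
      have hzu : u₁ - z > 0 := by linarith [hz.2]
      set t := (u₁ - u₀) / (u₁ - z) with htdef
      have ht0 : 0 < t := div_pos (by linarith) hzu
      have ht1 : t ≤ 1 := (div_le_one hzu).2 (by linarith [hz.2])
      have hτ : 0 < (u₁-u₀)/u₁ := div_pos (by linarith) hu₁pos
      have hτt : (u₁-u₀)/u₁ ≤ t := by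
        rw [htdef]
        gcongr
        linarith [hz.1]
      have hcomb : t * z + (1 - t) * u₁ = u₀ := by
        have hmul : t * (u₁ - z) = u₁ - u₀ := by rw [htdef]; exact div_mul_cancel₀ _ hzu.ne'
        linear_combination -hmul
      have h := hlc z u₁ t ht0.le ht1
      rw [hcomb] at h
      exact side_aux f hf0 hc0 hc1 hcu1 hcu0 ht1 h hτ hτt
    -- right bound
    have hright : ∀ z ∈ Set.Icc u₁ (1:ℝ), f z ≤ (f u₁ / c) ^ (1/((u₁-u₀)/(1-u₀))) := by
      intro z hz
      have hzu : z - u₀ > 0 := by linarith [hz.1]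
      set t := (u₁ - u₀) / (z - u₀) with htdef
      have ht0 : 0 < t := div_pos (by linarith) hzu
      have ht1 : t ≤ 1 := (div_le_one hzu).2 (by linarith [hz.1])
      have hτ : 0 < (u₁-u₀)/(1-u₀) := div_pos (by linarith) (by linarith)
      have hτt : (u₁-u₀)/(1-u₀) ≤ t := by
        rw [htdef]
        gcongr
        linarith [hz.2]
      have hcomb : t * z + (1 - t) * u₀ = u₁ := by
        have hmul : t * (z - u₀) = u₁ - u₀ := by rw [htdef]; exact div_mul_cancel₀ _ hzu.ne'
        linear_combination hmul
      have h := hlc z u₀ t ht0.le ht1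
      rw [hcomb] at h
      exact side_aux f hf0 hc0 hc1 hcu0 hcu1 ht1 h hτ hτt
    refine ⟨max (max ((f u₀ / c) ^ (1/((u₁-u₀)/u₁))) ((f u₁ / c) ^ (1/((u₁-u₀)/(1-u₀)))))
      (f ((u₀+u₁)/2) ^ 2 / c), fun u => ?_⟩
    by_cases hu : u ∈ Set.Icc (0:ℝ) 1
    · rcases le_total u u₀ with h | h
      · exact le_trans (hleft u ⟨hu.1, h⟩) (le_max_of_le_left (le_max_left _ _))
      · rcases le_total u u₁ with h' | h'
        · exact le_trans (hmid u ⟨h, h'⟩) (le_max_right _ _)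
        · exact le_trans (hright u ⟨h', hu.2⟩) (le_max_of_le_left (le_max_right _ _))
    · rw [hdom u hu]
      exact le_max_of_le_right (div_nonneg (sq_nonneg _) hc0.le)
  · push_neg at h2
    by_cases hp : ∃ p, 0 < f p
    · obtain ⟨p, hp⟩ := hp
      refine ⟨f p, fun u => ?_⟩
      rcases lt_trichotomy u p with h | h | h
      · by_contra hcon
        push_neg at hcon
        have hfu : 0 < f u := lt_trans hp hcon
        exact absurd hp (not_lt.2 (h2 u p h hfu))
      · rw [h]
      · exact le_trans (h2 p u h hp) hp.le
    · push_neg at hp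
      exact ⟨0, fun u => hp u⟩

/-- Lower bound for a log-concave function `f = exp φ` (with `φ` concave, possibly `-∞`,
encoded by `f ≥ 0` and the multiplicative log-concavity inequality) whose domain is
contained in `[0,1]` and which is within squared Hellinger distance `δ²` of the uniform
density on `[0,1]`: `φ x ≥ -4δ/√(min x (1-x))` whenever `min x (1-x) ≥ 4δ²`. -/
theorem logconcave_near_uniform_lower (f : ℝ → ℝ) (δ : ℝ)
    (hδ0 : 0 < δ) (hδ : δ ≤ 2 ^ (-(5:ℝ)/2))
    (hf0 : ∀ x, 0 ≤ f x)
    (hlc : ∀ x y : ℝ, ∀ t : ℝ, 0 ≤ t → t ≤ 1 →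
      f x ^ t * f y ^ (1 - t) ≤ f (t * x + (1 - t) * y))
    (hdom : ∀ x, x ∉ Set.Icc (0:ℝ) 1 → f x = 0)
    (hH : ∫ u in Set.Icc (0:ℝ) 1, (Real.sqrt (f u) - 1) ^ 2 ≤ δ ^ 2) :
    ∀ x ∈ Set.Icc (0:ℝ) 1, 4 * δ ^ 2 ≤ min x (1 - x) →
      Real.exp (-4 * δ / Real.sqrt (min x (1 - x))) ≤ f x := by
  intro x hx hm4
  set m := min x (1 - x) with hmdef
  have hm0 : 0 < m := lt_of_lt_of_le (by positivity) hm4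
  have hmx : m ≤ x := min_le_left _ _
  have hmx' : m ≤ 1 - x := min_le_right _ _
  have hsm : 0 < Real.sqrt m := Real.sqrt_pos.2 hm0
  have h2δ : 2 * δ ≤ Real.sqrt m := by
    have e : (2*δ) = Real.sqrt ((2*δ)^2) := (Real.sqrt_sq (by positivity)).symm
    rw [e]
    exact Real.sqrt_le_sqrt (by nlinarith)
  set s := δ / Real.sqrt m with hs
  have hs0 : 0 < s := div_pos hδ0 hsm
  have hs12 : s ≤ 1/2 := by
    rw [hs, div_le_iff₀ hsm]
    linarith
  -- Step A : exp(-2s) ≤ 1 - s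
  have hexp : Real.exp (-(2*s)) ≤ 1 - s := by
    have key : 1 ≤ (1 - s) * Real.exp (2*s) := by
      nlinarith [Real.add_one_le_exp (2*s)]
    rw [Real.exp_neg, inv_eq_one_div, div_le_iff₀ (Real.exp_pos _)]
    exact key
  -- Step B : (1-s)^2 ≤ f x
  have hmain : (1 - s)^2 ≤ f x := by
    by_contra hcon
    push_neg at hcon
    have hsq : Real.sqrt (f x) < 1 - s := by
      have h1 : Real.sqrt (f x) < Real.sqrt ((1-s)^2) := Real.sqrt_lt_sqrt (hf0 x) hcon
      rwa [Real.sqrt_sq (by linarith)] at h1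
    obtain ⟨p, q, hp0, hq1, hlenJ, hJ⟩ :
        ∃ p q : ℝ, 0 ≤ p ∧ q ≤ 1 ∧ m ≤ q - p ∧ ∀ u ∈ Set.Icc p q, f u ≤ f x := by
      by_cases hL : ∀ u ∈ Set.Icc (0:ℝ) x, f u ≤ f x
      · exact ⟨0, x, le_refl _, hx.2, by linarith, hL⟩
      · by_cases hR : ∀ u ∈ Set.Icc x 1, f u ≤ f x
        · exact ⟨x, 1, hx.1, le_refl _, by linarith, hR⟩
        · exfalso
          push_neg at hL hR
          obtain ⟨a, ha, hfa⟩ := hL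
          obtain ⟨b, hb, hfb⟩ := hR
          have hax : a ≤ x := ha.2
          have hxb : x ≤ b := hb.1
          have hfa0 : 0 < f a := lt_of_le_of_lt (hf0 x) hfa
          have hfb0 : 0 < f b := lt_of_le_of_lt (hf0 x) hfb
          have hq := quasi f hlc hfa0 hfb0 hax hxb
          exact absurd hq (not_le.2 (lt_min hfa hfb))
    have hpq : p ≤ q := by linarith
    have hmeasg : Measurable fun u => (Real.sqrt (f u) - 1)^2 :=
      ((Real.continuous_sqrt.measurable.comp (logconcave_measurable f hf0 hlc)).sub
        measurable_const).pow_const 2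
    obtain ⟨M, hM⟩ := logconcave_bdd f hf0 hlc hdom
    have hgbd : ∀ u, (Real.sqrt (f u) - 1)^2 ≤ M + 1 := by
      intro u
      have h1 : Real.sqrt (f u) ^ 2 = f u := Real.sq_sqrt (hf0 u)
      nlinarith [Real.sqrt_nonneg (f u), hM u]
    have hInt : IntegrableOn (fun u => (Real.sqrt (f u) - 1)^2) (Set.Icc (0:ℝ) 1) := by
      refine Integrable.mono' (g := fun _ => M + 1) ?_ hmeasg.aestronglyMeasurable ?_
      · exact integrableOn_const (by rw [Real.volume_Icc]; exact ENNReal.ofReal_ne_top)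
      · filter_upwards with u
        rw [Real.norm_eq_abs, abs_of_nonneg (sq_nonneg _)]
        exact hgbd u
    set C := (1 - Real.sqrt (f x))^2 with hC
    have hC_pos : s^2 < C := by nlinarith [Real.sqrt_nonneg (f x)]
    have hptwise : ∀ u ∈ Set.Icc p q, C ≤ (Real.sqrt (f u) - 1)^2 := by
      intro u hu
      have h1 : Real.sqrt (f u) ≤ Real.sqrt (f x) := Real.sqrt_le_sqrt (hJ u hu)
      have h2 : Real.sqrt (f x) ≤ 1 := by nlinarith
      nlinarith [Real.sqrt_nonneg (f u)]
    have hIJ : IntegrableOn (fun u => (Real.sqrt (f u) - 1)^2) (Set.Icc p q) :=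
      hInt.mono_set (Set.Icc_subset_Icc hp0 hq1)
    have h1 : (q - p) * C ≤ ∫ u in Set.Icc p q, (Real.sqrt (f u) - 1)^2 := by
      have hconst : IntegrableOn (fun _ => C) (Set.Icc p q) :=
        integrableOn_const (by rw [Real.volume_Icc]; exact ENNReal.ofReal_ne_top)
      have hmono := setIntegral_mono_on hconst hIJ measurableSet_Icc hptwise
      rwa [setIntegral_const, Real.volume_real_Icc_of_le hpq,
        smul_eq_mul] at hmono
    have h2 : (∫ u in Set.Icc p q, (Real.sqrt (f u) - 1)^2)
        ≤ ∫ u in Set.Icc (0:ℝ) 1, (Real.sqrt (f u) - 1)^2 :=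
      setIntegral_mono_set hInt (Filter.Eventually.of_forall fun u => sq_nonneg _)
        ((Set.Icc_subset_Icc hp0 hq1).eventuallyLE)
    have hms : m * s^2 = δ^2 := by
      rw [hs, div_pow, Real.sq_sqrt hm0.le]
      field_simp
    have c1 : m * C ≤ (q - p) * C :=
      mul_le_mul_of_nonneg_right hlenJ (sq_nonneg _)
    have c2 : m * s^2 < m * C := by
      exact mul_lt_mul_of_pos_left hC_pos hm0
    linarith [hH, h1, h2, hms, c1, c2]
  have e4 : -4 * δ / Real.sqrt m = -(2*s) + -(2*s) := by
    rw [hs]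
    ring
  rw [e4, Real.exp_add]
  calc Real.exp (-(2*s)) * Real.exp (-(2*s)) ≤ (1-s) * (1-s) :=
        mul_le_mul hexp hexp (Real.exp_pos _).le (by linarith)
    _ = (1-s)^2 := by ring
    _ ≤ f x := hmain
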